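/- The Graver basis G(A) is a test set for minimizing any separable convex function f over S = {x ∈ ℤ^n : Ax = b, l ≤ x ≤ u}: if x̄ ∈ S is not optimal, then there exist g ∈ G(A) and λ ∈ ℤ_{>0} with x̄ + λg ∈ S and f(x̄ + λg) < f(x̄). -/

import Mathlib

lemma comp_between (h y : ℤ) (h1 : 0 ≤ h * y) (h2 : |h| ≤ |y|) :
    (0 ≤ h ∧ h ≤ y) ∨ (y ≤ h ∧ h ≤ 0) := by
  rcases lt_trichotomy h 0 with hh | hh | hh
  · right
    constructor
    · rcases lt_trichotomy y 0 with hy | hy | hy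
      · rw [abs_of_neg hh, abs_of_neg hy] at h2; omega
      · subst hy; simp at h2; omega
      · nlinarith
    · omega
  · subst hh
    rcases le_or_gt 0 y with hy | hy
    · left; omega
    · right; omega
  · left
    constructor
    · omega
    · rcases lt_trichotomy y 0 with hy | hy | hy
      · nlinarith
      · subst hy; simp at h2; omega
      · rw [abs_of_pos hh, abs_of_pos hy] at h2; omega

lemma conv_step (φ : ℝ → ℝ) (hφ : ConvexOn ℝ Set.univ φ) (a s t : ℝ) (hst : 0 ≤ s * t) :
    φ (a + s) + φ (a + t) ≤ φ a + φ (a + s + t) := by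
  rcases eq_or_ne (s + t) 0 with h0 | h0
  · have hs : s = 0 := by nlinarith
    have ht : t = 0 := by nlinarith
    simp [hs, ht]
  · have hsn : 0 ≤ s / (s + t) := by
      rcases lt_or_gt_of_ne h0 with hneg | hpos
      · apply div_nonneg_iff.mpr; right
        constructor
        · nlinarith
        · linarith
      · apply div_nonneg_iff.mpr; left
        constructor
        · nlinarith
        · linarith
    have htn : 0 ≤ t / (s + t) := by
      rcases lt_or_gt_of_ne h0 with hneg | hpos
      · apply div_nonneg_iff.mpr; right
        constructor
        · nlinarith
        · linarith
      · apply div_nonneg_iff.mpr; left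
        constructor
        · nlinarith
        · linarith
    have hsum : t / (s + t) + s / (s + t) = 1 := by field_simp; ring
    have e1 := hφ.2 (Set.mem_univ a) (Set.mem_univ (a + s + t)) htn hsn hsum
    have e2 := hφ.2 (Set.mem_univ a) (Set.mem_univ (a + s + t)) hsn htn (by linarith)
    have a1 : (t / (s + t)) • a + (s / (s + t)) • (a + s + t) = a + s := by
      simp only [smul_eq_mul]
      rw [div_mul_eq_mul_div, div_mul_eq_mul_div, ← add_div, div_eq_iff h0]; ring
    have a2 : (s / (s + t)) • a + (t / (s + t)) • (a + s + t) = a + t := by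
      simp only [smul_eq_mul]
      rw [div_mul_eq_mul_div, div_mul_eq_mul_div, ← add_div, div_eq_iff h0]; ring
    rw [a1] at e1
    rw [a2] at e2
    simp only [smul_eq_mul] at e1 e2
    have : (t / (s+t)) * φ a + (s / (s+t)) * φ (a+s+t) + ((s / (s+t)) * φ a + (t / (s+t)) * φ (a+s+t)) = φ a + φ (a+s+t) := by
      linear_combination (φ a + φ (a + s + t)) * hsum
    linarith [e1, e2]

lemma mul_nonneg_nn (a b : ℤ) (ha : a ≤ 0) (hb : b ≤ 0) : 0 ≤ a * b := by nlinarith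

lemma graver_key {m n : ℕ} (A : Matrix (Fin m) (Fin n) ℤ)
    (f : Fin n → ℝ → ℝ) (hf : ∀ j, ConvexOn ℝ Set.univ (f j))
    (F : (Fin n → ℤ) → ℝ) (hF : ∀ x, F x = ∑ j, f j (x j : ℝ))
    (xbar : Fin n → ℤ) :
    ∀ N : ℕ, ∀ y : Fin n → ℤ, (∑ i, (y i).natAbs) ≤ N → A.mulVec y = 0 →
      F (xbar + y) < F xbar →
      ∃ g : Fin n → ℤ, A.mulVec g = 0 ∧ g ≠ 0 ∧
        (∀ h : Fin n → ℤ, A.mulVec h = 0 → h ≠ 0 →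
          (∀ i, 0 ≤ h i * g i ∧ |h i| ≤ |g i|) → h = g) ∧
        (∀ i, 0 ≤ g i * y i ∧ |g i| ≤ |y i|) ∧
        F (xbar + g) < F xbar := by
  intro N
  induction N with
  | zero =>
    intro y hy _ hlt
    have hy0 : y = 0 := by
      funext i
      have h1 : (y i).natAbs = 0 := by
        have := Finset.sum_eq_zero_iff.mp (Nat.le_zero.mp hy) i (Finset.mem_univ i)
        exact this
      simp only [Pi.zero_apply]; omega
    rw [hy0, add_zero] at hlt
    exact absurd hlt (lt_irrefl _)
  | succ N ih =>
    intro y hy hker hlt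
    have hy0 : y ≠ 0 := by rintro rfl; simp at hlt
    by_cases hmin : ∀ h : Fin n → ℤ, A.mulVec h = 0 → h ≠ 0 →
        (∀ i, 0 ≤ h i * y i ∧ |h i| ≤ |y i|) → h = y
    · exact ⟨y, hker, hy0, hmin, fun i => ⟨mul_self_nonneg _, le_refl _⟩, hlt⟩
    · push_neg at hmin
      obtain ⟨h, hhker, hh0, hsub, hhy⟩ := hmin
      have hbet : ∀ i, (0 ≤ h i ∧ h i ≤ y i) ∨ (y i ≤ h i ∧ h i ≤ 0) :=
        fun i => comp_between _ _ (hsub i).1 (hsub i).2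
      have hnormsplit : ∀ i, (y i - h i).natAbs + (h i).natAbs = (y i).natAbs :=
        fun i => by rcases hbet i with ⟨a, b⟩ | ⟨a, b⟩ <;> omega
      have hstrict : ∃ i, (h i).natAbs < (y i).natAbs := by
        by_contra hc; push_neg at hc
        apply hhy; funext i
        have := hc i
        rcases hbet i with ⟨a, b⟩ | ⟨a, b⟩ <;> omega
      have hpos : 0 < ∑ i, (h i).natAbs := by
        rcases Nat.eq_zero_or_pos (∑ i, (h i).natAbs) with h0 | h0
        · exfalso; apply hh0; funext i
          have := Finset.sum_eq_zero_iff.mp h0 i (Finset.mem_univ i)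
          simp only [Pi.zero_apply]; omega
        · exact h0
      have hsum_h : (∑ i, (h i).natAbs) < ∑ i, (y i).natAbs := by
        obtain ⟨i0, hi0⟩ := hstrict
        exact Finset.sum_lt_sum
          (fun i _ => by rcases hbet i with ⟨a, b⟩ | ⟨a, b⟩ <;> omega)
          ⟨i0, Finset.mem_univ _, hi0⟩
      have hsum_split : (∑ i, (y i - h i).natAbs) + (∑ i, (h i).natAbs)
          = ∑ i, (y i).natAbs := by
        rw [← Finset.sum_add_distrib]
        exact Finset.sum_congr rfl fun i _ => hnormsplit i
      have hsup : F (xbar + h) + F (xbar + (y - h)) ≤ F xbar + F (xbar + y) := by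
        rw [hF (xbar + h), hF (xbar + (y - h)), hF xbar, hF (xbar + y),
          ← Finset.sum_add_distrib, ← Finset.sum_add_distrib]
        apply Finset.sum_le_sum
        intro j _
        have hprodZ : (0 : ℤ) ≤ h j * (y j - h j) := by
          rcases hbet j with ⟨a, b⟩ | ⟨a, b⟩
          · exact mul_nonneg a (by omega)
          · exact mul_nonneg_nn _ _ b (by omega)
        have hprod : (0 : ℝ) ≤ (h j : ℝ) * ((y j : ℝ) - (h j : ℝ)) := by
          have : ((0 : ℤ) : ℝ) ≤ ((h j * (y j - h j) : ℤ) : ℝ) := Int.cast_le.mpr hprodZ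
          push_cast at this; linarith [this]
        have hc := conv_step (f j) (hf j) (xbar j : ℝ) (h j : ℝ)
          ((y j : ℝ) - (h j : ℝ)) hprod
        simp only [Pi.add_apply, Pi.sub_apply]
        have e1 : ((xbar j + h j : ℤ) : ℝ) = (xbar j : ℝ) + (h j : ℝ) := by push_cast; ring
        have e2 : ((xbar j + (y j - h j) : ℤ) : ℝ)
            = (xbar j : ℝ) + ((y j : ℝ) - (h j : ℝ)) := by push_cast; ring
        have e3 : ((xbar j + y j : ℤ) : ℝ)
            = (xbar j : ℝ) + (h j : ℝ) + ((y j : ℝ) - (h j : ℝ)) := by push_cast; ring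
        rw [e1, e2, e3]; exact hc
      have hcase : F (xbar + h) < F xbar ∨ F (xbar + (y - h)) < F xbar := by
        by_contra hc; push_neg at hc; linarith [hc.1, hc.2]
      rcases hcase with hlt' | hlt'
      · obtain ⟨g, hg1, hg2, hg3, hg4, hg5⟩ := ih h (by omega) hhker hlt'
        refine ⟨g, hg1, hg2, hg3, fun i => ?_, hg5⟩
        have b1 := comp_between _ _ (hg4 i).1 (hg4 i).2
        have b2 := hbet i
        constructor
        · rcases b1 with ⟨a, b⟩ | ⟨a, b⟩ <;> rcases b2 with ⟨c, d⟩ | ⟨c, d⟩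
          · exact mul_nonneg a (by omega)
          · have hgz : g i = 0 := by omega
            rw [hgz]; simp
          · have hgz : g i = 0 := by omega
            rw [hgz]; simp
          · exact mul_nonneg_nn _ _ b (by omega)
        · simp only [Int.abs_eq_natAbs]
          rcases b1 with ⟨a, b⟩ | ⟨a, b⟩ <;> rcases b2 with ⟨c, d⟩ | ⟨c, d⟩ <;> omega
      · have hkersub : A.mulVec (y - h) = 0 := by
          rw [Matrix.mulVec_sub, hker, hhker, sub_zero]
        have hrw : (∑ i, ((y - h) i).natAbs) = ∑ i, (y i - h i).natAbs :=
          Finset.sum_congr rfl fun i _ => by simp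
        obtain ⟨g, hg1, hg2, hg3, hg4, hg5⟩ := ih (y - h) (by omega) hkersub hlt'
        refine ⟨g, hg1, hg2, hg3, fun i => ?_, hg5⟩
        have hg4' := hg4 i
        simp only [Pi.sub_apply] at hg4'
        have b1 := comp_between _ _ hg4'.1 hg4'.2
        have b2 := hbet i
        constructor
        · rcases b1 with ⟨a, b⟩ | ⟨a, b⟩ <;> rcases b2 with ⟨c, d⟩ | ⟨c, d⟩
          · exact mul_nonneg a (by omega)
          · have hgz : g i = 0 := by omega
            rw [hgz]; simp
          · have hgz : g i = 0 := by omega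
            rw [hgz]; simp
          · exact mul_nonneg_nn _ _ b (by omega)
        · simp only [Int.abs_eq_natAbs]
          rcases b1 with ⟨a, b⟩ | ⟨a, b⟩ <;> rcases b2 with ⟨c, d⟩ | ⟨c, d⟩ <;> omega

/-- The Graver basis is a test set for separable convex minimization over
`S = {x ∈ ℤⁿ : Ax = b, l ≤ x ≤ u}`: any non-optimal `x̄ ∈ S` admits an
augmenting step `x̄ + λ g` with `g ∈ G(A)` and `λ ∈ ℤ_{>0}`. -/
theorem graver_is_test_set (m n : ℕ) (A : Matrix (Fin m) (Fin n) ℤ)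
    (b : Fin m → ℤ) (l u : Fin n → ℤ)
    (f : Fin n → ℝ → ℝ) (hf : ∀ j, ConvexOn ℝ Set.univ (f j))
    (F : (Fin n → ℤ) → ℝ) (hF : ∀ x, F x = ∑ j, f j (x j : ℝ))
    (xbar : Fin n → ℤ)
    (hxbar : A.mulVec xbar = b ∧ ∀ i, l i ≤ xbar i ∧ xbar i ≤ u i)
    (hnonopt : ∃ x : Fin n → ℤ,
      (A.mulVec x = b ∧ ∀ i, l i ≤ x i ∧ x i ≤ u i) ∧ F x < F xbar) :
    ∃ (g : Fin n → ℤ) (lam : ℤ),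
      (A.mulVec g = 0 ∧ g ≠ 0 ∧
        ∀ h : Fin n → ℤ, A.mulVec h = 0 → h ≠ 0 →
          (∀ i, 0 ≤ h i * g i ∧ |h i| ≤ |g i|) → h = g) ∧
      0 < lam ∧
      (A.mulVec (xbar + lam • g) = b ∧
        ∀ i, l i ≤ (xbar + lam • g) i ∧ (xbar + lam • g) i ≤ u i) ∧
      F (xbar + lam • g) < F xbar := by
  obtain ⟨x, ⟨hxA, hxb⟩, hxlt⟩ := hnonopt
  set y : Fin n → ℤ := x - xbar with hy
  have hykernel : A.mulVec y = 0 := by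
    rw [hy, Matrix.mulVec_sub, hxA, hxbar.1, sub_self]
  have hxy : xbar + y = x := by funext i; simp [hy]
  have hlt : F (xbar + y) < F xbar := by rw [hxy]; exact hxlt
  obtain ⟨g, hg1, hg2, hg3, hg4, hg5⟩ :=
    graver_key A f hf F hF xbar (∑ i, (y i).natAbs) y (le_refl _) hykernel hlt
  refine ⟨g, 1, ⟨hg1, hg2, hg3⟩, one_pos, ⟨?_, ?_⟩, ?_⟩
  · rw [one_smul, Matrix.mulVec_add, hg1, hxbar.1, add_zero]
  · intro i
    have hbet := comp_between _ _ (hg4 i).1 (hg4 i).2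
    have h1 := hxbar.2 i
    have h2 := hxb i
    have h3 : y i = x i - xbar i := by simp [hy]
    simp only [one_smul, Pi.add_apply]
    rcases hbet with ⟨a, b⟩ | ⟨a, b⟩ <;> omega
  · rw [one_smul]; exact hg5
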